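/- Sum-of-squares decomposition of the two-party Bell operator: Let A₀, A₁ be Hermitian n×n matrices and B₀, B₁ Hermitian m×m matrices with A₀² ⪯ Iₙ, A₁² ⪯ Iₙ, B₀² ⪯ Iₘ, B₁² ⪯ Iₘ. For a, b ∈ {0,1} define P_a = (−1)^a Ã₁ ⊗ Iₘ − Iₙ ⊗ B₁ and Q_{a,b} = (−1)^{a+b} Ã₀ ⊗ Iₘ − Iₙ ⊗ B₀. Then P_a² + Q_{a,b}² ⪯ 2 (2·I_{nm} − B̂_{a,b}) in the positive semidefinite order. -/

import Mathlib

/-!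
Sum-of-squares decomposition of the two-party Bell operator:
`P_a² + Q_{a,b}² ⪯ 2 (2·I − B̂_{a,b})`.
-/

open Matrix Finset
open scoped Matrix Kronecker ComplexOrder

noncomputable section

/-- `tildeA A 0 = (A₀ - A₁)/√2` and `tildeA A 1 = (A₀ + A₁)/√2`. -/
def tildeA {n : Type*} (A : Fin 2 → Matrix n n ℂ) (j : Fin 2) : Matrix n n ℂ :=
  (Real.sqrt 2 : ℂ)⁻¹ • (A 0 + (-1 : ℂ) ^ ((j : ℕ) + 1) • A 1)

/-- The Bell operator `B̂_{a,b} = (−1)^a (Ã₁ ⊗ B₁ + (−1)^b Ã₀ ⊗ B₀)`. -/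
def BellOp {n m : Type*} (A : Fin 2 → Matrix n n ℂ) (B : Fin 2 → Matrix m m ℂ)
    (a b : Fin 2) : Matrix (n × m) (n × m) ℂ :=
  (-1 : ℂ) ^ (a : ℕ) • (tildeA A 1 ⊗ₖ B 1 + (-1 : ℂ) ^ (b : ℕ) • (tildeA A 0 ⊗ₖ B 0))

lemma kron_conjTranspose {n m : Type*} [Fintype n] [Fintype m]
    (M : Matrix n n ℂ) (N : Matrix m m ℂ) :
    (M ⊗ₖ N)ᴴ = Mᴴ ⊗ₖ Nᴴ := by
  ext ⟨i, j⟩ ⟨k, l⟩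
  simp [Matrix.conjTranspose_apply, Matrix.kroneckerMap_apply]

lemma kron_psd {n m : Type*} [Fintype n] [Fintype m] [DecidableEq n] [DecidableEq m]
    {M : Matrix n n ℂ} {N : Matrix m m ℂ}
    (hM : M.PosSemidef) (hN : N.PosSemidef) : (M ⊗ₖ N).PosSemidef := by
  exact hM.kronecker hN

lemma sub_kron {N M : Type*} (X Y : Matrix N N ℂ) (P : Matrix M M ℂ) :
    (X - Y) ⊗ₖ P = X ⊗ₖ P - Y ⊗ₖ P := by
  ext ⟨i, j⟩ ⟨k, l⟩
  simp [Matrix.kroneckerMap_apply, sub_mul]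

lemma kron_sub {N M : Type*} (P : Matrix N N ℂ) (X Y : Matrix M M ℂ) :
    P ⊗ₖ (X - Y) = P ⊗ₖ X - P ⊗ₖ Y := by
  ext ⟨i, j⟩ ⟨k, l⟩
  simp [Matrix.kroneckerMap_apply, mul_sub]

lemma kron_sq_sub {N M : Type*} [Fintype N] [Fintype M] [DecidableEq N] [DecidableEq M]
    (T : Matrix N N ℂ) (Bm : Matrix M M ℂ) (c : ℂ) (hc : c * c = 1) :
    (c • (T ⊗ₖ (1 : Matrix M M ℂ)) - (1 : Matrix N N ℂ) ⊗ₖ Bm) ^ 2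
      = (T ^ 2) ⊗ₖ (1 : Matrix M M ℂ) + (1 : Matrix N N ℂ) ⊗ₖ (Bm ^ 2)
        - (2 * c) • (T ⊗ₖ Bm) := by
  have hcomm : (T ⊗ₖ (1 : Matrix M M ℂ)) * ((1 : Matrix N N ℂ) ⊗ₖ Bm) = T ⊗ₖ Bm := by
    rw [← Matrix.mul_kronecker_mul, mul_one, one_mul]
  have hcomm' : ((1 : Matrix N N ℂ) ⊗ₖ Bm) * (T ⊗ₖ (1 : Matrix M M ℂ)) = T ⊗ₖ Bm := by
    rw [← Matrix.mul_kronecker_mul, mul_one, one_mul]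
  have hsqT : (T ⊗ₖ (1 : Matrix M M ℂ)) * (T ⊗ₖ (1 : Matrix M M ℂ))
      = (T ^ 2) ⊗ₖ (1 : Matrix M M ℂ) := by
    rw [← Matrix.mul_kronecker_mul, one_mul, ← pow_two]
  have hsqB : ((1 : Matrix N N ℂ) ⊗ₖ Bm) * ((1 : Matrix N N ℂ) ⊗ₖ Bm)
      = (1 : Matrix N N ℂ) ⊗ₖ (Bm ^ 2) := by
    rw [← Matrix.mul_kronecker_mul, one_mul, ← pow_two]
  rw [pow_two]
  simp only [sub_mul, mul_sub, smul_mul_assoc, mul_smul_comm, smul_smul, hc, one_smul]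
  rw [hsqT, hsqB, hcomm, hcomm']
  match_scalars <;> (try simp [pow_two, hc]) <;> try ring

lemma tilde_sq_sum {N : Type*} [Fintype N] [DecidableEq N]
    (A : Fin 2 → Matrix N N ℂ) :
    tildeA A 0 ^ 2 + tildeA A 1 ^ 2 = A 0 ^ 2 + A 1 ^ 2 := by
  set r : ℂ := (Real.sqrt 2 : ℂ)⁻¹ with hrdef
  have hr : r * r = (2 : ℂ)⁻¹ := by
    rw [hrdef, ← mul_inv, ← Complex.ofReal_mul, Real.mul_self_sqrt (by norm_num : (0:ℝ) ≤ 2)]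
    norm_num
  have h0 : tildeA A 0 = r • (A 0 - A 1) := by
    simp [tildeA, sub_eq_add_neg, hrdef]
  have h1 : tildeA A 1 = r • (A 0 + A 1) := by
    simp [tildeA, hrdef]
  have hr2 : r ^ 2 * (2 : ℂ) = 1 := by
    rw [pow_two, hr]; norm_num
  rw [h0, h1, smul_pow, smul_pow, ← smul_add,
    show (A 0 - A 1) ^ 2 + (A 0 + A 1) ^ 2 = (2 : ℂ) • (A 0 ^ 2 + A 1 ^ 2) by
      rw [two_smul]; noncomm_ring,
    smul_smul, hr2, one_smul]

theorem sos_decomposition_two_party (n m : ℕ)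
    (A : Fin 2 → Matrix (Fin n) (Fin n) ℂ) (B : Fin 2 → Matrix (Fin m) (Fin m) ℂ)
    (hAh : ∀ x, (A x).IsHermitian) (hBh : ∀ x, (B x).IsHermitian)
    (hA1 : ∀ x, ((1 : Matrix (Fin n) (Fin n) ℂ) - A x ^ 2).PosSemidef)
    (hB1 : ∀ x, ((1 : Matrix (Fin m) (Fin m) ℂ) - B x ^ 2).PosSemidef)
    (a b : Fin 2) :
    ((2 : ℂ) • ((2 : ℂ) • (1 : Matrix (Fin n × Fin m) (Fin n × Fin m) ℂ) - BellOp A B a b)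
      - (((-1 : ℂ) ^ (a : ℕ) • (tildeA A 1 ⊗ₖ (1 : Matrix (Fin m) (Fin m) ℂ))
            - (1 : Matrix (Fin n) (Fin n) ℂ) ⊗ₖ B 1) ^ 2
        + ((-1 : ℂ) ^ ((a : ℕ) + (b : ℕ)) • (tildeA A 0 ⊗ₖ (1 : Matrix (Fin m) (Fin m) ℂ))
            - (1 : Matrix (Fin n) (Fin n) ℂ) ⊗ₖ B 0) ^ 2)).PosSemidef := by
  have hsq : ∀ k : ℕ, ((-1 : ℂ) ^ k) * ((-1 : ℂ) ^ k) = 1 := by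
    intro k; rw [← pow_add, ← two_mul, pow_mul]; norm_num
  have key : ((2 : ℂ) • ((2 : ℂ) • (1 : Matrix (Fin n × Fin m) (Fin n × Fin m) ℂ) - BellOp A B a b)
      - (((-1 : ℂ) ^ (a : ℕ) • (tildeA A 1 ⊗ₖ (1 : Matrix (Fin m) (Fin m) ℂ))
            - (1 : Matrix (Fin n) (Fin n) ℂ) ⊗ₖ B 1) ^ 2
        + ((-1 : ℂ) ^ ((a : ℕ) + (b : ℕ)) • (tildeA A 0 ⊗ₖ (1 : Matrix (Fin m) (Fin m) ℂ))
            - (1 : Matrix (Fin n) (Fin n) ℂ) ⊗ₖ B 0) ^ 2))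
      = ((1 : Matrix (Fin n) (Fin n) ℂ) - A 0 ^ 2) ⊗ₖ (1 : Matrix (Fin m) (Fin m) ℂ)
        + ((1 : Matrix (Fin n) (Fin n) ℂ) - A 1 ^ 2) ⊗ₖ (1 : Matrix (Fin m) (Fin m) ℂ)
        + (1 : Matrix (Fin n) (Fin n) ℂ) ⊗ₖ ((1 : Matrix (Fin m) (Fin m) ℂ) - B 0 ^ 2)
        + (1 : Matrix (Fin n) (Fin n) ℂ) ⊗ₖ ((1 : Matrix (Fin m) (Fin m) ℂ) - B 1 ^ 2) := by
    rw [kron_sq_sub _ _ _ (hsq a), kron_sq_sub _ _ _ (hsq ((a:ℕ)+(b:ℕ))), BellOp]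
    have hA2 : (A 0 ^ 2) ⊗ₖ (1 : Matrix (Fin m) (Fin m) ℂ)
        + (A 1 ^ 2) ⊗ₖ (1 : Matrix (Fin m) (Fin m) ℂ)
        = (tildeA A 0 ^ 2) ⊗ₖ (1 : Matrix (Fin m) (Fin m) ℂ)
          + (tildeA A 1 ^ 2) ⊗ₖ (1 : Matrix (Fin m) (Fin m) ℂ) := by
      rw [← Matrix.add_kronecker, ← Matrix.add_kronecker, tilde_sq_sum]
    simp only [sub_kron, kron_sub, Matrix.one_kronecker_one, pow_add]
    rw [show ((1 : Matrix (Fin n × Fin m) (Fin n × Fin m) ℂ) - (A 0 ^ 2) ⊗ₖ 1)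
        + (1 - (A 1 ^ 2) ⊗ₖ 1) + (1 - (1 : Matrix (Fin n) (Fin n) ℂ) ⊗ₖ (B 0 ^ 2))
        + (1 - (1 : Matrix (Fin n) (Fin n) ℂ) ⊗ₖ (B 1 ^ 2))
        = (4 : ℂ) • 1 - ((A 0 ^ 2) ⊗ₖ 1 + (A 1 ^ 2) ⊗ₖ 1)
          - (1 : Matrix (Fin n) (Fin n) ℂ) ⊗ₖ (B 0 ^ 2)
          - (1 : Matrix (Fin n) (Fin n) ℂ) ⊗ₖ (B 1 ^ 2) by module, hA2]
    module
  rw [key]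
  exact (((kron_psd (hA1 0) Matrix.PosSemidef.one).add
    (kron_psd (hA1 1) Matrix.PosSemidef.one)).add
    (kron_psd Matrix.PosSemidef.one (hB1 0))).add
    (kron_psd Matrix.PosSemidef.one (hB1 1))


end
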